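/- Let A be a finite-dimensional selfinjective algebra over a field K, I an ideal of A, and e an idempotent of A such that l_A(I) = eI. Then l_{eAe}(I) = eIe = r_{eAe}(I), where annihilators are computed inside the corner algebra eAe acting on I. -/

import Mathlib

open MulOpposite

set_option linter.unusedSectionVars false

namespace CornerStuff

universe u

variable {A : Type u} [Ring A]

/-- The right-multiplication-by-orbit map `a ↦ op a • x`, as an `Aᵐᵒᵖ`-linear map. -/
def opSmulMap {M : Type u} [AddCommGroup M] [Module Aᵐᵒᵖ M] (x : M) : A →ₗ[Aᵐᵒᵖ] M where
  toFun a := op a • x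
  map_add' a b := by rw [← add_smul]; rfl
  map_smul' r a := by
    simp only [RingHom.id_apply]
    simp [MulOpposite.smul_eq_mul_unop, op_mul, mul_smul]

@[simp] lemma opSmulMap_apply {M : Type u} [AddCommGroup M] [Module Aᵐᵒᵖ M] (x : M) (a : A) :
    opSmulMap x a = op a • x := rfl

lemma opSmulMap_one {M : Type u} [AddCommGroup M] [Module Aᵐᵒᵖ M] (x : M) :
    opSmulMap x (1 : A) = x := by simp

/-- Every `Aᵐᵒᵖ`-linear map from a right ideal of `A` to `A` is left multiplication
by some element, provided `A` is right self-injective. -/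
lemma exists_left_mul_of_map [Module.Injective Aᵐᵒᵖ A] (Y : Submodule Aᵐᵒᵖ A)
    (f : Y →ₗ[Aᵐᵒᵖ] A) : ∃ c : A, ∀ y : Y, f y = c * (y : A) := by
  obtain ⟨h, hh⟩ := Module.Injective.out Y.subtype Subtype.val_injective f
  refine ⟨h 1, fun y => ?_⟩
  have : (y : A) = op (y : A) • (1 : A) := by simp
  calc f y = h (Y.subtype y) := (hh y).symm
    _ = h (op (y : A) • (1 : A)) := by rw [Submodule.subtype_apply, ← this]
    _ = op (y : A) • h 1 := by rw [map_smul]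
    _ = h 1 * (y : A) := by simp [MulOpposite.smul_eq_mul_unop]

/-- Extension of maps into a complemented submodule of `A` (relative injectivity). -/
lemma extend_into_compl [Module.Injective Aᵐᵒᵖ A] {W C : Submodule Aᵐᵒᵖ A} (hWC : IsCompl W C)
    {X Y : Type u} [AddCommGroup X] [AddCommGroup Y] [Module Aᵐᵒᵖ X] [Module Aᵐᵒᵖ Y]
    (i : X →ₗ[Aᵐᵒᵖ] Y) (hi : Function.Injective i) (g : X →ₗ[Aᵐᵒᵖ] W) :
    ∃ h : Y →ₗ[Aᵐᵒᵖ] W, ∀ x, h (i x) = g x := by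
  obtain ⟨H, hH⟩ := Module.Injective.out i hi (W.subtype ∘ₗ g)
  refine ⟨(Submodule.projectionOnto W C hWC) ∘ₗ H, fun x => ?_⟩
  simp only [LinearMap.comp_apply] at hH ⊢
  rw [hH x, Submodule.subtype_apply, Submodule.projectionOnto_apply_left]

/-- Lifting a map from a complemented submodule of `A` through a surjection. -/
lemma lift_through_surjective {W C : Submodule Aᵐᵒᵖ A} (hWC : IsCompl W C)
    {M' Q' : Type u} [AddCommGroup M'] [AddCommGroup Q'] [Module Aᵐᵒᵖ M'] [Module Aᵐᵒᵖ Q']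
    (π : M' →ₗ[Aᵐᵒᵖ] Q') (hπ : Function.Surjective π) (f : W →ₗ[Aᵐᵒᵖ] Q') :
    ∃ g : W →ₗ[Aᵐᵒᵖ] M', π ∘ₗ g = f := by
  set f' : A →ₗ[Aᵐᵒᵖ] Q' := f ∘ₗ (Submodule.projectionOnto W C hWC)
  obtain ⟨m₀, hm₀⟩ := hπ (f' 1)
  refine ⟨(opSmulMap m₀) ∘ₗ W.subtype, ?_⟩
  ext w
  simp only [LinearMap.comp_apply, Submodule.subtype_apply, opSmulMap_apply]
  rw [map_smul, hm₀]
  have : op (w : A) • f' 1 = f' (op (w : A) • (1 : A)) := (map_smul f' _ _).symm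
  rw [this]
  have h1 : op (w : A) • (1 : A) = (w : A) := by simp
  rw [h1]
  show f (Submodule.projectionOnto W C hWC (w : A)) = f w
  rw [Submodule.projectionOnto_apply_left]

section Fitting

variable {M : Type u} [AddCommGroup M] [Module Aᵐᵒᵖ M]

/-- Fitting's lemma. -/
lemma fitting [IsArtinian Aᵐᵒᵖ M] [IsNoetherian Aᵐᵒᵖ M] (φ : M →ₗ[Aᵐᵒᵖ] M) :
    ∃ n : ℕ, 0 < n ∧ IsCompl (LinearMap.ker (φ ^ n)) (LinearMap.range (φ ^ n)) := by
  -- kernels stabilize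
  have hker : ∃ n, ∀ m, n ≤ m → LinearMap.ker (φ ^ n) = LinearMap.ker (φ ^ m) := by
    obtain ⟨n, hn⟩ := monotone_stabilizes_iff_noetherian.mpr ‹_›
      ⟨fun n => LinearMap.ker (φ ^ n), fun a b hab => by
        intro x hx
        have hx' : (φ ^ a) x = 0 := hx
        show (φ ^ b) x = 0
        obtain ⟨c, rfl⟩ := Nat.exists_eq_add_of_le hab
        rw [add_comm, pow_add, Module.End.mul_apply, hx', map_zero]⟩
    exact ⟨n, fun m hm => hn m hm⟩
  have hrange : ∃ n, ∀ m, n ≤ m → LinearMap.range (φ ^ n) = LinearMap.range (φ ^ m) := by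
    obtain ⟨n, hn⟩ := monotone_stabilizes_iff_artinian.mpr ‹_›
      ⟨fun n => OrderDual.toDual (LinearMap.range (φ ^ n)), fun a b hab => by
        intro x hx
        have hx' : ∃ y, (φ ^ b) y = x := hx
        show ∃ y, (φ ^ a) y = x
        obtain ⟨y, rfl⟩ := hx'
        obtain ⟨c, rfl⟩ := Nat.exists_eq_add_of_le hab
        refine ⟨(φ ^ c) y, ?_⟩
        rw [pow_add, Module.End.mul_apply]⟩
    exact ⟨n, fun m hm => congrArg OrderDual.ofDual (hn m hm)⟩
  obtain ⟨n₁, h₁⟩ := hker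
  obtain ⟨n₂, h₂⟩ := hrange
  set n := n₁ + n₂ + 1
  have hn₁ : n₁ ≤ n := by omega
  have hn₂ : n₂ ≤ n := by omega
  have hnn : n ≤ n + n := by omega
  refine ⟨n, by omega, ?_, ?_⟩
  · -- disjoint
    rw [disjoint_iff]
    rw [eq_bot_iff]
    rintro x hx
    rw [Submodule.mem_inf] at hx
    obtain ⟨hx1, hx2⟩ := hx
    rw [LinearMap.mem_ker] at hx1
    obtain ⟨y, rfl⟩ := hx2
    have : y ∈ LinearMap.ker (φ ^ (n + n)) := by
      rw [LinearMap.mem_ker, pow_add, Module.End.mul_apply, hx1]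
    rw [← h₁ (n+n) (le_trans hn₁ hnn), h₁ n hn₁] at this
    rw [LinearMap.mem_ker] at this
    rw [Submodule.mem_bot]
    exact this
  · -- codisjoint
    rw [codisjoint_iff, eq_top_iff]
    rintro x -
    have : (φ ^ n) x ∈ LinearMap.range (φ ^ (n + n)) := by
      rw [← h₂ (n+n) (le_trans hn₂ hnn), h₂ n hn₂]
      exact ⟨x, rfl⟩
    obtain ⟨u, hu⟩ := this
    rw [pow_add, Module.End.mul_apply] at hu
    have hxk : x - (φ ^ n) u ∈ LinearMap.ker (φ ^ n) := by
      rw [LinearMap.mem_ker, map_sub, hu, sub_self]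
    have : x = (x - (φ ^ n) u) + (φ ^ n) u := by abel
    rw [this]
    exact Submodule.add_mem_sup hxk ⟨u, rfl⟩

end Fitting

/-- Internal indecomposability of a submodule of `A`. -/
def Indec (W : Submodule Aᵐᵒᵖ A) : Prop :=
  W ≠ ⊥ ∧ ∀ U V : Submodule Aᵐᵒᵖ A, U ≤ W → V ≤ W → Disjoint U V → U ⊔ V = W →
    U = ⊥ ∨ V = ⊥

lemma map_subtype_eq_bot {W : Submodule Aᵐᵒᵖ A} {U : Submodule Aᵐᵒᵖ (↥W)}
    (h : U.map W.subtype = ⊥) : U = ⊥ := by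
  rw [eq_bot_iff]
  intro x hx
  have : W.subtype x ∈ U.map W.subtype := Submodule.mem_map_of_mem hx
  rw [h, Submodule.mem_bot] at this
  rw [Submodule.mem_bot]
  exact Subtype.val_injective this

lemma indec_subtype_lattice {W : Submodule Aᵐᵒᵖ A} (hW : Indec W)
    {U V : Submodule Aᵐᵒᵖ (↥W)} (hdisj : Disjoint U V) (hsup : U ⊔ V = ⊤) :
    U = ⊥ ∨ V = ⊥ := by
  have hinj : Function.Injective W.subtype := Subtype.val_injective
  have h1 : (U.map W.subtype) ⊓ (V.map W.subtype) = ⊥ := by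
    rw [← Submodule.map_inf _ hinj, disjoint_iff.mp hdisj, Submodule.map_bot]
  have h2 : (U.map W.subtype) ⊔ (V.map W.subtype) = W := by
    rw [← Submodule.map_sup, hsup, Submodule.map_subtype_top]
  rcases hW.2 (U.map W.subtype) (V.map W.subtype) (Submodule.map_subtype_le _ _)
    (Submodule.map_subtype_le _ _) (disjoint_iff.mpr h1) h2 with h | h
  · exact Or.inl (map_subtype_eq_bot h)
  · exact Or.inr (map_subtype_eq_bot h)


section Dich

variable [IsArtinian Aᵐᵒᵖ A] [IsNoetherian Aᵐᵒᵖ A]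

/-- Fitting dichotomy for endomorphisms of an indecomposable complemented submodule. -/
lemma fitting_dichotomy {W : Submodule Aᵐᵒᵖ A} (hW : Indec W) (φ : ↥W →ₗ[Aᵐᵒᵖ] ↥W) :
    Function.Bijective φ ∨ ∃ n : ℕ, 0 < n ∧ (φ ^ n) = 0 := by
  obtain ⟨n, hn, hcompl⟩ := fitting φ
  rcases indec_subtype_lattice hW hcompl.disjoint (codisjoint_iff.mp hcompl.codisjoint)
    with h | h
  · -- kernel trivial: bijective
    left
    have hrange : LinearMap.range (φ ^ n) = ⊤ := by
      have := codisjoint_iff.mp hcompl.codisjoint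
      rwa [h, bot_sup_eq] at this
    obtain ⟨m, rfl⟩ := Nat.exists_eq_add_of_lt hn
    constructor
    · intro x y hxy
      have : (φ ^ (0 + m + 1)) x = (φ ^ (0 + m + 1)) y := by
        rw [pow_succ, Module.End.mul_apply, Module.End.mul_apply, hxy]
      have hk : x - y ∈ LinearMap.ker (φ ^ (0 + m + 1)) := by
        rw [LinearMap.mem_ker, map_sub, this, sub_self]
      rw [h, Submodule.mem_bot, sub_eq_zero] at hk
      exact hk
    · intro x
      have : x ∈ LinearMap.range (φ ^ (0 + m + 1)) := hrange ▸ Submodule.mem_top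
      obtain ⟨y, hy⟩ := this
      rw [pow_succ', Module.End.mul_apply] at hy
      exact ⟨(φ ^ (0 + m)) y, hy⟩
  · -- range trivial: nilpotent
    right
    refine ⟨n, hn, ?_⟩
    ext x
    have : (φ ^ n) x ∈ LinearMap.range (φ ^ n) := ⟨x, rfl⟩
    rw [h, Submodule.mem_bot] at this
    simpa using this

end Dich

section Decomp

variable [IsArtinian Aᵐᵒᵖ A]

/-- Decomposition of a complemented submodule into indecomposable complemented pieces. -/
lemma exists_indec_decomposition :
    ∀ N : Submodule Aᵐᵒᵖ A, (∃ C, IsCompl N C) →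
    ∃ (ι : Type) (_ : Finite ι) (Ws : ι → Submodule Aᵐᵒᵖ A),
      (⨆ i, Ws i) = N ∧ ∀ i, Indec (Ws i) ∧ ∃ C, IsCompl (Ws i) C := by
  intro N
  induction N using WellFoundedLT.induction with
  | _ N IH =>
  rintro ⟨C, hC⟩
  by_cases hbot : N = ⊥
  · exact ⟨PEmpty, inferInstance, PEmpty.elim, by simp [hbot], fun i => i.elim⟩
  by_cases hind : Indec N
  · exact ⟨PUnit, inferInstance, fun _ => N, by simp, fun _ => ⟨hind, C, hC⟩⟩
  -- N decomposes
  have : ∃ U V : Submodule Aᵐᵒᵖ A, U ≤ N ∧ V ≤ N ∧ Disjoint U V ∧ U ⊔ V = N ∧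
      U ≠ ⊥ ∧ V ≠ ⊥ := by
    rw [Indec, not_and] at hind
    have := hind hbot
    push_neg at this
    obtain ⟨U, V, h1, h2, h3, h4, h5⟩ := this
    exact ⟨U, V, h1, h2, h3, h4, h5.1, h5.2⟩
  obtain ⟨U, V, hUN, hVN, hdisj, hsup, hU0, hV0⟩ := this
  have hUlt : U < N := by
    rcases lt_or_eq_of_le hUN with h | h
    · exact h
    · exfalso
      apply hV0
      have hVU : V ≤ U := by rw [h]; exact hVN
      exact hdisj.symm.eq_bot_of_le hVU
  have hVlt : V < N := by
    rcases lt_or_eq_of_le hVN with h | h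
    · exact h
    · exfalso
      apply hU0
      have hUV : U ≤ V := by rw [h]; exact hUN
      exact (hdisj.eq_bot_of_le hUV)
  -- complements
  have hmod : N ⊓ (V ⊔ C) = V := by
    have := inf_sup_assoc_of_le (C) (hVN)  -- N ⊓ C ⊔ V = N ⊓ (C ⊔ V)?
    -- `inf_sup_assoc_of_le (y) (h : z ≤ x) : x ⊓ y ⊔ z = x ⊓ (y ⊔ z)`
    rw [sup_comm]
    rw [← this]
    rw [disjoint_iff.mp hC.disjoint, bot_sup_eq]
  have hUcompl : IsCompl U (V ⊔ C) := by
    constructor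
    · rw [disjoint_iff]
      rw [eq_bot_iff]
      intro x hx
      rw [Submodule.mem_inf] at hx
      have hxV : x ∈ V := by
        have : x ∈ N ⊓ (V ⊔ C) := Submodule.mem_inf.mpr ⟨hUN hx.1, hx.2⟩
        rwa [hmod] at this
      have : x ∈ U ⊓ V := Submodule.mem_inf.mpr ⟨hx.1, hxV⟩
      rwa [disjoint_iff.mp hdisj] at this
    · rw [codisjoint_iff, ← sup_assoc, hsup, codisjoint_iff.mp hC.codisjoint]
  have hVcompl : IsCompl V (U ⊔ C) := by
    have hmod' : N ⊓ (U ⊔ C) = U := by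
      have := inf_sup_assoc_of_le (C) (hUN)
      rw [sup_comm, ← this, disjoint_iff.mp hC.disjoint, bot_sup_eq]
    constructor
    · rw [disjoint_iff, eq_bot_iff]
      intro x hx
      rw [Submodule.mem_inf] at hx
      have hxU : x ∈ U := by
        have : x ∈ N ⊓ (U ⊔ C) := Submodule.mem_inf.mpr ⟨hVN hx.1, hx.2⟩
        rwa [hmod'] at this
      have : x ∈ U ⊓ V := Submodule.mem_inf.mpr ⟨hxU, hx.1⟩
      rwa [disjoint_iff.mp hdisj] at this
    · rw [codisjoint_iff, sup_comm V (U ⊔ C), sup_assoc, sup_comm C V, ← sup_assoc, hsup,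
        codisjoint_iff.mp hC.codisjoint]
  obtain ⟨ι₁, hfin1, Ws1, hsup1, hprop1⟩ := IH U hUlt ⟨V ⊔ C, hUcompl⟩
  obtain ⟨ι₂, hfin2, Ws2, hsup2, hprop2⟩ := IH V hVlt ⟨U ⊔ C, hVcompl⟩
  refine ⟨ι₁ ⊕ ι₂, inferInstance, Sum.elim Ws1 Ws2, ?_, ?_⟩
  · rw [iSup_sum]
    simp only [Sum.elim_inl, Sum.elim_inr]
    rw [hsup1, hsup2, hsup]
  · rintro (i | j)
    · exact hprop1 i
    · exact hprop2 j

end Decomp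

section Unique

variable [Module.Injective Aᵐᵒᵖ A] [IsArtinian Aᵐᵒᵖ A] [IsNoetherian Aᵐᵒᵖ A]

lemma coatom_unique {W C : Submodule Aᵐᵒᵖ A} (hWC : IsCompl W C) (hW : Indec W)
    {N₁ N₂ : Submodule Aᵐᵒᵖ (↥W)} (h₁ : IsCoatom N₁) (h₂ : IsCoatom N₂) : N₁ = N₂ := by
  by_contra hne
  have hsup : N₁ ⊔ N₂ = ⊤ := by
    apply h₁.2
    rcases lt_or_eq_of_le (le_sup_left : N₁ ≤ N₁ ⊔ N₂) with h | h
    · exact h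
    · exfalso
      have hle : N₂ ≤ N₁ := by
        conv_rhs => rw [h]
        exact le_sup_right
      rcases lt_or_eq_of_le hle with h' | h'
      · exact h₁.1 (h₂.2 _ h')
      · exact hne h'.symm
  set α : (↥W) →ₗ[Aᵐᵒᵖ] ((↥W ⧸ N₁) × (↥W ⧸ N₂)) := (N₁.mkQ).prod (N₂.mkQ) with hα
  have hαsurj : Function.Surjective α := by
    rintro ⟨p, q⟩
    obtain ⟨u, rfl⟩ := Submodule.Quotient.mk_surjective N₁ p
    obtain ⟨v, rfl⟩ := Submodule.Quotient.mk_surjective N₂ q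
    have hmem : u - v ∈ N₁ ⊔ N₂ := hsup ▸ Submodule.mem_top
    obtain ⟨x₁, hx₁, x₂, hx₂, hx⟩ := Submodule.mem_sup.mp hmem
    refine ⟨u - x₁, Prod.ext ?_ ?_⟩
    · show Submodule.Quotient.mk (u - x₁) = Submodule.Quotient.mk u
      rw [Submodule.Quotient.eq]
      simpa using N₁.neg_mem hx₁
    · show Submodule.Quotient.mk (u - x₁) = Submodule.Quotient.mk v
      rw [Submodule.Quotient.eq]
      have : u - x₁ - v = x₂ := by
        have : x₁ + x₂ = u - v := hx
        linear_combination (norm := abel) this.symm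
      rwa [this]
  set ε : ((↥W ⧸ N₁) × (↥W ⧸ N₂)) →ₗ[Aᵐᵒᵖ] ((↥W ⧸ N₁) × (↥W ⧸ N₂)) :=
    (LinearMap.fst _ _ _).prod 0 with hε
  have hεε : ε ∘ₗ ε = ε := by
    ext x <;> rfl
  obtain ⟨φ, hφ⟩ := lift_through_surjective hWC α hαsurj (ε ∘ₗ α)
  have hiter : ∀ n : ℕ, 0 < n → α ∘ₗ (φ ^ n) = ε ∘ₗ α := by
    intro n hn
    induction n with
    | zero => omega
    | succ m IH =>
      by_cases hm : m = 0
      · subst hm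
        simpa using hφ
      · have hm' : 0 < m := Nat.pos_of_ne_zero hm
        have hps : (φ ^ (m+1)) = (φ ^ m) ∘ₗ φ := by
          rw [pow_succ]; rfl
        calc α ∘ₗ (φ ^ (m+1)) = (α ∘ₗ (φ ^ m)) ∘ₗ φ := by rw [hps, LinearMap.comp_assoc]
          _ = (ε ∘ₗ α) ∘ₗ φ := by rw [IH hm']
          _ = ε ∘ₗ (α ∘ₗ φ) := by rw [LinearMap.comp_assoc]
          _ = ε ∘ₗ (ε ∘ₗ α) := by rw [hφ]
          _ = (ε ∘ₗ ε) ∘ₗ α := by rw [LinearMap.comp_assoc]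
          _ = ε ∘ₗ α := by rw [hεε]
  rcases fitting_dichotomy hW φ with hbij | ⟨n, hn, hnil⟩
  · have hex : ∃ u : ↥W, u ∉ N₂ := by
      by_contra hcon
      push_neg at hcon
      exact h₂.1 (eq_top_iff.mpr fun x _ => hcon x)
    obtain ⟨u, hu⟩ := hex
    obtain ⟨w, hw⟩ := (hαsurj.comp hbij.surjective) ((0 : ↥W ⧸ N₁), Submodule.Quotient.mk u)
    have hw' : α (φ w) = ε (α w) := by
      have := congrArg (fun f => f w) hφ
      simpa using this
    rw [Function.comp_apply] at hw
    rw [hw] at hw'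
    have h2nd := congrArg Prod.snd hw'
    simp only [hε, LinearMap.prod_apply, Pi.prod, LinearMap.zero_apply] at h2nd
    have : (Submodule.Quotient.mk u : ↥W ⧸ N₂) = 0 := h2nd
    rw [Submodule.Quotient.mk_eq_zero] at this
    exact hu this
  · have h0 : α ∘ₗ (φ ^ n) = ε ∘ₗ α := hiter n hn
    rw [hnil] at h0
    apply h₁.1
    rw [eq_top_iff]
    intro x _
    have := congrArg (fun f => f x) h0
    simp only [LinearMap.comp_apply, LinearMap.zero_apply, map_zero] at this
    have h1st := congrArg Prod.fst this
    simp only [hε, hα, LinearMap.prod_apply, Pi.prod, Submodule.mkQ_apply] at h1st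
    have : (Submodule.Quotient.mk x : ↥W ⧸ N₁) = 0 := h1st.symm
    rwa [Submodule.Quotient.mk_eq_zero] at this

lemma atom_unique {W C : Submodule Aᵐᵒᵖ A} (hWC : IsCompl W C) (hW : Indec W)
    {N₁ N₂ : Submodule Aᵐᵒᵖ (↥W)} (h₁ : IsAtom N₁) (h₂ : IsAtom N₂) : N₁ = N₂ := by
  by_contra hne
  have hdisj : N₁ ⊓ N₂ = ⊥ := by
    rcases lt_or_eq_of_le (inf_le_left : N₁ ⊓ N₂ ≤ N₁) with h | h
    · exact h₁.2 _ h
    · exfalso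
      have hle : N₁ ≤ N₂ := by
        conv_lhs => rw [← h]
        exact inf_le_right
      rcases lt_or_eq_of_le hle with h' | h'
      · exact h₁.1 (h₂.2 _ h')
      · exact hne h'
  have hκinj : Function.Injective (N₂.mkQ ∘ₗ N₁.subtype) := by
    intro x y hxy
    have hmem : ((x : ↥W) - (y : ↥W)) ∈ N₂ := by
      rw [← Submodule.Quotient.eq]
      exact hxy
    have hmem1 : ((x : ↥W) - (y : ↥W)) ∈ N₁ := N₁.sub_mem x.2 y.2
    have : ((x : ↥W) - (y : ↥W)) ∈ N₁ ⊓ N₂ := Submodule.mem_inf.mpr ⟨hmem1, hmem⟩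
    rw [hdisj, Submodule.mem_bot, sub_eq_zero] at this
    exact Subtype.ext this
  obtain ⟨h, hh⟩ := extend_into_compl (X := ↥N₁) (Y := ↥W ⧸ N₂) hWC (N₂.mkQ ∘ₗ N₁.subtype) hκinj N₁.subtype
  set φ : (↥W) →ₗ[Aᵐᵒᵖ] (↥W) := h ∘ₗ N₂.mkQ with hφdef
  have hφ1 : ∀ x : ↥W, x ∈ N₁ → φ x = x := by
    intro x hx
    have := hh ⟨x, hx⟩
    simpa [hφdef] using this
  have hφ2 : ∀ x : ↥W, x ∈ N₂ → φ x = 0 := by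
    intro x hx
    have hq : N₂.mkQ x = 0 := (Submodule.Quotient.mk_eq_zero N₂).mpr hx
    show h (N₂.mkQ x) = 0
    rw [hq, map_zero]
  rcases fitting_dichotomy hW φ with hbij | ⟨n, hn, hnil⟩
  · obtain ⟨x, hxmem, hx0⟩ := N₂.ne_bot_iff.mp h₂.1
    apply hx0
    apply hbij.injective
    rw [hφ2 x hxmem, map_zero]
  · obtain ⟨x, hxmem, hx0⟩ := N₁.ne_bot_iff.mp h₁.1
    have hfix : ∀ m : ℕ, (φ ^ m) x = x := by
      intro m
      induction m with
      | zero => rfl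
      | succ k IH =>
        rw [pow_succ, Module.End.mul_apply, hφ1 x hxmem, IH]
    have := hfix n
    rw [hnil, LinearMap.zero_apply] at this
    exact hx0 this.symm

/-- Injection from an extension of an injective map on the socle. -/
lemma inj_of_atom_map {W₁ C₁ W₂ C₂ : Submodule Aᵐᵒᵖ A}
    (h1 : IsCompl W₁ C₁) (hi1 : Indec W₁) (h2 : IsCompl W₂ C₂)
    {S₁ : Submodule Aᵐᵒᵖ (↥W₁)} {S₂ : Submodule Aᵐᵒᵖ (↥W₂)}
    (hS₁ : IsAtom S₁) (τ : (↥S₁) →ₗ[Aᵐᵒᵖ] (↥S₂)) (hτ : Function.Injective τ) :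
    ∃ f : (↥W₁) →ₗ[Aᵐᵒᵖ] (↥W₂), Function.Injective f := by
  obtain ⟨f, hf⟩ := extend_into_compl (X := ↥S₁) (Y := ↥W₁) h2 S₁.subtype
    Subtype.val_injective (S₂.subtype ∘ₗ τ)
  refine ⟨f, ?_⟩
  rw [← LinearMap.ker_eq_bot]
  by_contra hkb
  haveI : IsAtomic (Submodule Aᵐᵒᵖ (↥W₁)) :=
    isAtomic_of_orderBot_wellFounded_lt (wellFounded_lt)
  rcases IsAtomic.eq_bot_or_exists_atom_le (LinearMap.ker f) with h | ⟨a, ha, hale⟩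
  · exact hkb h
  · have haS : a = S₁ := atom_unique h1 hi1 ha hS₁
    obtain ⟨x, hxmem, hx0⟩ := S₁.ne_bot_iff.mp hS₁.1
    have hxker : x ∈ LinearMap.ker f := hale (haS ▸ hxmem)
    rw [LinearMap.mem_ker] at hxker
    have hfx : f (S₁.subtype ⟨x, hxmem⟩) = S₂.subtype (τ ⟨x, hxmem⟩) := hf _
    rw [Submodule.subtype_apply] at hfx
    rw [hxker] at hfx
    have : τ ⟨x, hxmem⟩ = 0 := Subtype.val_injective hfx.symm
    have : (⟨x, hxmem⟩ : ↥S₁) = 0 := hτ (by rw [this, map_zero])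
    exact hx0 (congrArg Subtype.val this)

/-- If the socles of two indecomposable complemented submodules are isomorphic,
so are the submodules. -/
lemma iso_of_atom_iso {W₁ C₁ W₂ C₂ : Submodule Aᵐᵒᵖ A}
    (h1 : IsCompl W₁ C₁) (hi1 : Indec W₁) (h2 : IsCompl W₂ C₂) (hi2 : Indec W₂)
    {S₁ : Submodule Aᵐᵒᵖ (↥W₁)} {S₂ : Submodule Aᵐᵒᵖ (↥W₂)}
    (hS₁ : IsAtom S₁) (hS₂ : IsAtom S₂) (σ : (↥S₁) ≃ₗ[Aᵐᵒᵖ] (↥S₂)) :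
    Nonempty ((↥W₁) ≃ₗ[Aᵐᵒᵖ] (↥W₂)) := by
  obtain ⟨f, hfinj⟩ := inj_of_atom_map h1 hi1 h2 hS₁ (σ : (↥S₁) →ₗ[Aᵐᵒᵖ] (↥S₂)) σ.injective
  obtain ⟨g, hginj⟩ := inj_of_atom_map h2 hi2 h1 hS₂ (σ.symm : (↥S₂) →ₗ[Aᵐᵒᵖ] (↥S₁))
    σ.symm.injective
  have hgf : Function.Injective (g ∘ₗ f) := fun x y hxy => hfinj (hginj hxy)
  have hgfsurj : Function.Surjective (g ∘ₗ f) :=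
    IsArtinian.surjective_of_injective_endomorphism (g ∘ₗ f) hgf
  have hfsurj : Function.Surjective f := by
    intro y
    obtain ⟨x, hx⟩ := hgfsurj (g y)
    exact ⟨x, hginj hx⟩
  exact ⟨LinearEquiv.ofBijective f ⟨hfinj, hfsurj⟩⟩

end Unique

section Kasch

variable [Module.Injective Aᵐᵒᵖ A] [IsArtinian Aᵐᵒᵖ A] [IsNoetherian Aᵐᵒᵖ A]

lemma atom_embeds_quot {W : Submodule Aᵐᵒᵖ A} (S : Submodule Aᵐᵒᵖ (↥W)) (hS : IsAtom S) :
    ∃ m' : Submodule Aᵐᵒᵖ A, IsCoatom m' ∧ Nonempty ((A ⧸ m') ≃ₗ[Aᵐᵒᵖ] ↥S) := by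
  haveI : IsSimpleModule Aᵐᵒᵖ ↥S := isSimpleModule_iff_isAtom.mpr hS
  haveI : Nontrivial (↥S) := IsSimpleModule.nontrivial Aᵐᵒᵖ (↥S)
  obtain ⟨x, hx⟩ := exists_ne (0 : ↥S)
  have hsurj : Function.Surjective (opSmulMap (A := A) x) := by
    intro y
    rcases (IsSimpleModule.toIsSimpleOrder (R := Aᵐᵒᵖ) (M := ↥S)).eq_bot_or_eq_top
      (LinearMap.range (opSmulMap (A := A) x)) with h | h
    · exfalso
      apply hx
      have hmem : x ∈ LinearMap.range (opSmulMap (A := A) x) := ⟨1, opSmulMap_one x⟩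
      rw [h, Submodule.mem_bot] at hmem
      exact hmem
    · exact (h ▸ Submodule.mem_top : y ∈ LinearMap.range (opSmulMap (A := A) x))
  have e := LinearMap.quotKerEquivOfSurjective (opSmulMap (A := A) x) hsurj
  refine ⟨LinearMap.ker (opSmulMap (A := A) x), ?_, ⟨e⟩⟩
  rw [← isSimpleModule_iff_isCoatom]
  exact IsSimpleModule.congr (N := ↥S) e

lemma coatom_from_family {ι : Type} (Ws : ι → Submodule Aᵐᵒᵖ A) (hsup : (⨆ i, Ws i) = ⊤)
    (m : Submodule Aᵐᵒᵖ A) (hm : IsCoatom m) :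
    ∃ (i : ι) (T : Submodule Aᵐᵒᵖ (↥(Ws i))), IsCoatom T ∧
      Nonempty ((↥(Ws i) ⧸ T) ≃ₗ[Aᵐᵒᵖ] (A ⧸ m)) := by
  have hex : ∃ i, ¬ Ws i ≤ m := by
    by_contra h
    push_neg at h
    have : (⊤ : Submodule Aᵐᵒᵖ A) ≤ m := hsup ▸ iSup_le h
    exact hm.1 (top_le_iff.mp this)
  obtain ⟨i, hi⟩ := hex
  have hsupm : Ws i ⊔ m = ⊤ := by
    have hlt : m < m ⊔ Ws i := by
      rcases lt_or_eq_of_le (le_sup_left : m ≤ m ⊔ Ws i) with h | h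
      · exact h
      · exfalso
        apply hi
        conv_rhs => rw [h]
        exact le_sup_right
    rw [sup_comm]
    exact hm.2 _ hlt
  have hβ : Function.Surjective (m.mkQ ∘ₗ (Ws i).subtype) := by
    intro q
    obtain ⟨u, rfl⟩ := Submodule.Quotient.mk_surjective m q
    have hmem : u ∈ Ws i ⊔ m := hsupm ▸ Submodule.mem_top
    obtain ⟨w, hw, y, hy, heq⟩ := Submodule.mem_sup.mp hmem
    refine ⟨⟨w, hw⟩, ?_⟩
    show Submodule.Quotient.mk w = Submodule.Quotient.mk u
    rw [Submodule.Quotient.eq]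
    have : w - u = -y := by rw [← heq]; abel
    rw [this]
    exact m.neg_mem hy
  haveI : IsSimpleModule Aᵐᵒᵖ (A ⧸ m) := isSimpleModule_iff_isCoatom.mpr hm
  have e := LinearMap.quotKerEquivOfSurjective _ hβ
  haveI hsimp : IsSimpleModule Aᵐᵒᵖ (↥(Ws i) ⧸ LinearMap.ker (m.mkQ ∘ₗ (Ws i).subtype)) :=
    IsSimpleModule.congr e
  exact ⟨i, LinearMap.ker (m.mkQ ∘ₗ (Ws i).subtype), isSimpleModule_iff_isCoatom.mp hsimp, ⟨e⟩⟩

/-- The Kasch property: every simple module embeds into `A`. -/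
theorem kasch_embedding (m : Submodule Aᵐᵒᵖ A) (hm : IsCoatom m) :
    ∃ ε : (A ⧸ m) →ₗ[Aᵐᵒᵖ] A, Function.Injective ε := by
  classical
  obtain ⟨ι, hfin, Ws, hsup, hprop⟩ :=
    exists_indec_decomposition (⊤ : Submodule Aᵐᵒᵖ A) ⟨⊥, isCompl_top_bot⟩
  haveI : Finite ι := hfin
  have hInd : ∀ i, Indec (Ws i) := fun i => (hprop i).1
  choose Cs hCs using fun i => (hprop i).2
  -- existence of atoms and coatoms in each piece
  have hatom : ∀ i, ∃ S : Submodule Aᵐᵒᵖ (↥(Ws i)), IsAtom S := by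
    intro i
    haveI hnt : Nontrivial (↥(Ws i)) := Submodule.nontrivial_iff_ne_bot.mpr (hInd i).1
    haveI : IsAtomic (Submodule Aᵐᵒᵖ (↥(Ws i))) :=
      isAtomic_of_orderBot_wellFounded_lt wellFounded_lt
    rcases IsAtomic.eq_bot_or_exists_atom_le (⊤ : Submodule Aᵐᵒᵖ (↥(Ws i))) with h | ⟨a, ha, _⟩
    · exfalso
      obtain ⟨x, y, hxy⟩ := hnt
      apply hxy
      have hx : x ∈ (⊥ : Submodule Aᵐᵒᵖ (↥(Ws i))) := h ▸ Submodule.mem_top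
      have hy : y ∈ (⊥ : Submodule Aᵐᵒᵖ (↥(Ws i))) := h ▸ Submodule.mem_top
      rw [Submodule.mem_bot] at hx hy
      rw [hx, hy]
    · exact ⟨a, ha⟩
  choose Soc hSoc using hatom
  have hcoatom : ∀ i, ∃ T : Submodule Aᵐᵒᵖ (↥(Ws i)), IsCoatom T := by
    intro i
    haveI hnt : Nontrivial (↥(Ws i)) := Submodule.nontrivial_iff_ne_bot.mpr (hInd i).1
    haveI : IsCoatomic (Submodule Aᵐᵒᵖ (↥(Ws i))) :=
      isCoatomic_of_orderTop_gt_wellFounded wellFounded_gt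
    rcases IsCoatomic.eq_top_or_exists_le_coatom (⊥ : Submodule Aᵐᵒᵖ (↥(Ws i))) with h | ⟨T, hT, _⟩
    · exfalso
      obtain ⟨x, y, hxy⟩ := hnt
      apply hxy
      have hx : x ∈ (⊥ : Submodule Aᵐᵒᵖ (↥(Ws i))) := h.symm ▸ Submodule.mem_top
      have hy : y ∈ (⊥ : Submodule Aᵐᵒᵖ (↥(Ws i))) := h.symm ▸ Submodule.mem_top
      rw [Submodule.mem_bot] at hx hy
      rw [hx, hy]
    · exact ⟨T, hT⟩
  choose Tops hTops using hcoatom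
  -- transfer lemmas
  have hMT : ∀ i j, Nonempty ((↥(Ws i)) ≃ₗ[Aᵐᵒᵖ] (↥(Ws j))) →
      Nonempty ((↥(Ws i) ⧸ Tops i) ≃ₗ[Aᵐᵒᵖ] (↥(Ws j) ⧸ Tops j)) := by
    rintro i j ⟨e⟩
    have hc : IsCoatom ((Tops i).map (e : (↥(Ws i)) →ₗ[Aᵐᵒᵖ] (↥(Ws j)))) := by
      have h0 := (OrderIso.isCoatom_iff (Submodule.orderIsoMapComap
        (e : (↥(Ws i)) ≃ₗ[Aᵐᵒᵖ] (↥(Ws j)))) (Tops i)).mpr (hTops i)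
      exact h0
    have heq : (Tops i).map (e : (↥(Ws i)) →ₗ[Aᵐᵒᵖ] (↥(Ws j))) = Tops j :=
      coatom_unique (hCs j) (hInd j) hc (hTops j)
    exact ⟨Submodule.Quotient.equiv _ _ e heq⟩
  have hMS : ∀ i j, Nonempty ((↥(Ws i)) ≃ₗ[Aᵐᵒᵖ] (↥(Ws j))) →
      Nonempty ((↥(Soc i)) ≃ₗ[Aᵐᵒᵖ] (↥(Soc j))) := by
    rintro i j ⟨e⟩
    have hc : IsAtom ((Soc i).map (e : (↥(Ws i)) →ₗ[Aᵐᵒᵖ] (↥(Ws j)))) := by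
      have h0 := (OrderIso.isAtom_iff (Submodule.orderIsoMapComap
        (e : (↥(Ws i)) ≃ₗ[Aᵐᵒᵖ] (↥(Ws j)))) (Soc i)).mpr (hSoc i)
      exact h0
    have heq : (Soc i).map (e : (↥(Ws i)) →ₗ[Aᵐᵒᵖ] (↥(Ws j))) = Soc j :=
      atom_unique (hCs j) (hInd j) hc (hSoc j)
    exact ⟨(e.submoduleMap (Soc i)).trans (LinearEquiv.ofEq _ _ heq)⟩
  -- the `g` map
  have hg : ∀ i, ∃ j, Nonempty ((↥(Ws j) ⧸ Tops j) ≃ₗ[Aᵐᵒᵖ] (↥(Soc i))) := by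
    intro i
    obtain ⟨m', hm', ⟨e1⟩⟩ := atom_embeds_quot (Soc i) (hSoc i)
    obtain ⟨j, T, hT, ⟨e2⟩⟩ := coatom_from_family Ws hsup m' hm'
    have heq : T = Tops j := coatom_unique (hCs j) (hInd j) hT (hTops j)
    subst heq
    exact ⟨j, ⟨e2.trans e1⟩⟩
  choose g hgspec using hg
  -- setoids and quotients
  let sM : Setoid ι := ⟨fun i j => Nonempty ((↥(Ws i)) ≃ₗ[Aᵐᵒᵖ] (↥(Ws j))),
    ⟨fun i => ⟨LinearEquiv.refl _ _⟩, fun ⟨e⟩ => ⟨e.symm⟩, fun ⟨e⟩ ⟨f⟩ => ⟨e.trans f⟩⟩⟩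
  let sT : Setoid ι := ⟨fun i j => Nonempty ((↥(Ws i) ⧸ Tops i) ≃ₗ[Aᵐᵒᵖ] (↥(Ws j) ⧸ Tops j)),
    ⟨fun i => ⟨LinearEquiv.refl _ _⟩, fun ⟨e⟩ => ⟨e.symm⟩, fun ⟨e⟩ ⟨f⟩ => ⟨e.trans f⟩⟩⟩
  let π : Quotient sM → Quotient sT := Quotient.map' id (fun i j h => hMT i j h)
  have hπsurj : Function.Surjective π := by
    intro q
    obtain ⟨i, rfl⟩ := Quotient.exists_rep q
    exact ⟨Quotient.mk sM i, rfl⟩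
  have hresp : ∀ i j, sM.r i j → Quotient.mk sT (g i) = Quotient.mk sT (g j) := by
    intro i j hij
    apply Quotient.sound
    obtain ⟨σ⟩ := hMS i j hij
    obtain ⟨ei⟩ := hgspec i
    obtain ⟨ej⟩ := hgspec j
    exact ⟨ei.trans ((σ.trans ej.symm))⟩
  let gbar : Quotient sM → Quotient sT := Quotient.lift (fun i => Quotient.mk sT (g i)) hresp
  have hgbarinj : Function.Injective gbar := by
    intro q1 q2 h
    obtain ⟨i, rfl⟩ := Quotient.exists_rep q1
    obtain ⟨i', rfl⟩ := Quotient.exists_rep q2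
    have hrel : Nonempty ((↥(Ws (g i)) ⧸ Tops (g i)) ≃ₗ[Aᵐᵒᵖ] (↥(Ws (g i')) ⧸ Tops (g i'))) :=
      Quotient.exact h
    obtain ⟨et⟩ := hrel
    obtain ⟨ei⟩ := hgspec i
    obtain ⟨ei'⟩ := hgspec i'
    have hsoc : Nonempty ((↥(Soc i)) ≃ₗ[Aᵐᵒᵖ] (↥(Soc i'))) := ⟨(ei.symm.trans et).trans ei'⟩
    obtain ⟨σ⟩ := hsoc
    apply Quotient.sound
    exact iso_of_atom_iso (hCs i) (hInd i) (hCs i') (hInd i') (hSoc i) (hSoc i') σ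
  have hcard : Nat.card (Quotient sM) = Nat.card (Quotient sT) :=
    le_antisymm (Nat.card_le_card_of_injective gbar hgbarinj)
      (Nat.card_le_card_of_surjective π hπsurj)
  have hgbarsurj : Function.Surjective gbar :=
    ((Nat.bijective_iff_injective_and_card gbar).mpr ⟨hgbarinj, hcard⟩).surjective
  -- conclude
  obtain ⟨j, T, hT, ⟨e2⟩⟩ := coatom_from_family Ws hsup m hm
  have heqT : T = Tops j := coatom_unique (hCs j) (hInd j) hT (hTops j)
  subst heqT
  obtain ⟨qm, hqm⟩ := hgbarsurj (Quotient.mk sT j)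
  obtain ⟨i, rfl⟩ := Quotient.exists_rep qm
  have hrel : Nonempty ((↥(Ws (g i)) ⧸ Tops (g i)) ≃ₗ[Aᵐᵒᵖ] (↥(Ws j) ⧸ Tops j)) :=
    Quotient.exact hqm
  obtain ⟨et⟩ := hrel
  obtain ⟨ei⟩ := hgspec i
  -- A ⧸ m ≃ Ws j ⧸ Tops j ≃ Ws (g i) ⧸ Tops (g i) ≃ Soc i ⊆ Ws i ⊆ A
  let chain : (A ⧸ m) ≃ₗ[Aᵐᵒᵖ] (↥(Soc i)) := (e2.symm.trans et.symm).trans ei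
  refine ⟨(Ws i).subtype ∘ₗ (Soc i).subtype ∘ₗ (chain : (A ⧸ m) →ₗ[Aᵐᵒᵖ] ↥(Soc i)), ?_⟩
  intro a b hab
  simp only [LinearMap.comp_apply] at hab
  exact chain.injective (Subtype.val_injective (Subtype.val_injective hab))

end Kasch

end CornerStuff

open CornerStuff MulOpposite

/-- The left annihilator of a subset of a ring. -/
def lAnn {A : Type*} [Ring A] (S : Set A) : Set A := {a : A | ∀ x ∈ S, a * x = 0}

section Crux

variable {A : Type u} [Ring A] [Module.Injective Aᵐᵒᵖ A]
  [IsArtinian Aᵐᵒᵖ A] [IsNoetherian Aᵐᵒᵖ A]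

/-- The key (hard) step: if every left annihilator of `I` lies in `eI ⊆ I`, then every
element right-annihilated by `I` lies in `I`. -/
theorem mem_of_right_ann (I : Ideal A) (hI : ∀ x ∈ I, ∀ a : A, x * a ∈ I) (e : A)
    (lem2 : ∀ w : A, (∀ y ∈ I, w * y = 0) → ∃ x ∈ I, w = e * x)
    (z : A) (hz2 : ∀ y ∈ I, y * z = 0) : z ∈ I := by
  classical
  set I'' : Submodule Aᵐᵒᵖ A :=
    { carrier := {a : A | a ∈ I}
      add_mem' := fun ha hb => I.add_mem ha hb
      zero_mem' := I.zero_mem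
      smul_mem' := fun r x hx => by
        show x * r.unop ∈ I
        exact hI x hx r.unop } with hI''def
  set T : Submodule Aᵐᵒᵖ A :=
    { carrier := {a : A | z * a ∈ I}
      add_mem' := fun {a b} ha hb => by
        show z * (a + b) ∈ I
        rw [mul_add]
        exact I.add_mem ha hb
      zero_mem' := by
        show z * 0 ∈ I
        rw [mul_zero]
        exact I.zero_mem
      smul_mem' := fun r a ha => by
        show z * (a * r.unop) ∈ I
        rw [← mul_assoc]
        exact hI _ ha r.unop } with hTdef
  by_cases h1T : (1 : A) ∈ T
  · have : z * 1 ∈ I := h1T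
    rwa [mul_one] at this
  haveI : IsCoatomic (Submodule Aᵐᵒᵖ A) := isCoatomic_of_orderTop_gt_wellFounded wellFounded_gt
  rcases IsCoatomic.eq_top_or_exists_le_coatom T with hTt | ⟨m, hm, hTm⟩
  · exact absurd (hTt ▸ Submodule.mem_top) h1T
  obtain ⟨ε, hε⟩ := kasch_embedding m hm
  have h1m : (1 : A) ∉ m := by
    intro h1
    apply hm.1
    rw [eq_top_iff]
    intro a _
    have := m.smul_mem (op a) h1
    simpa [MulOpposite.smul_eq_mul_unop] using this
  set Y : Submodule Aᵐᵒᵖ A := I'' ⊔ Submodule.span Aᵐᵒᵖ {z} with hYdef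
  have hzY : z ∈ Y := Submodule.mem_sup_right (Submodule.mem_span_singleton_self z)
  set N : Submodule Aᵐᵒᵖ (↥Y) := I''.comap Y.subtype with hNdef
  set zbar : (↥Y ⧸ N) := Submodule.Quotient.mk (⟨z, hzY⟩ : ↥Y) with hzbar
  set τ : Aᵐᵒᵖ →ₗ[Aᵐᵒᵖ] (↥Y ⧸ N) := LinearMap.toSpanSingleton Aᵐᵒᵖ _ zbar with hτdef
  have hτsurj : Function.Surjective τ := by
    intro b
    obtain ⟨y, rfl⟩ := Submodule.Quotient.mk_surjective N b
    have hy2 : (y : A) ∈ I'' ⊔ Submodule.span Aᵐᵒᵖ {z} := y.2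
    obtain ⟨w, hw, v, hv, hwv⟩ := Submodule.mem_sup.mp hy2
    obtain ⟨r, hr⟩ := Submodule.mem_span_singleton.mp hv
    refine ⟨r, ?_⟩
    show r • zbar = Submodule.Quotient.mk y
    rw [hzbar, ← Submodule.Quotient.mk_smul, Submodule.Quotient.eq]
    have hval : ((r • (⟨z, hzY⟩ : ↥Y) - y : ↥Y) : A) = r • z - (y : A) := rfl
    show (r • (⟨z, hzY⟩ : ↥Y) - y : ↥Y) ∈ N
    rw [hNdef, Submodule.mem_comap, Submodule.subtype_apply, hval, hr]
    have : v - (y : A) = -w := by rw [← hwv]; abel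
    rw [this]
    exact I''.neg_mem hw
  set ω : Aᵐᵒᵖ →ₗ[Aᵐᵒᵖ] (A ⧸ m) :=
    LinearMap.toSpanSingleton Aᵐᵒᵖ _ (Submodule.Quotient.mk (1 : A)) with hωdef
  have hker : LinearMap.ker τ ≤ LinearMap.ker ω := by
    intro r hr
    rw [LinearMap.mem_ker] at hr ⊢
    have hmem : (r • (⟨z, hzY⟩ : ↥Y) : ↥Y) ∈ N := by
      rw [← Submodule.Quotient.mk_eq_zero, Submodule.Quotient.mk_smul]
      exact hr
    have hTr : r.unop ∈ T := by
      have h1 : ((r • (⟨z, hzY⟩ : ↥Y) : ↥Y) : A) ∈ I'' := hmem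
      have h2 : ((r • (⟨z, hzY⟩ : ↥Y) : ↥Y) : A) = z * r.unop := by
        show r • z = z * r.unop
        rw [MulOpposite.smul_eq_mul_unop]
      rw [h2] at h1
      exact h1
    have hmr : r.unop ∈ m := hTm hTr
    rw [hωdef, LinearMap.toSpanSingleton_apply, ← Submodule.Quotient.mk_smul,
      Submodule.Quotient.mk_eq_zero]
    have : r • (1 : A) = r.unop := by rw [MulOpposite.smul_eq_mul_unop, one_mul]
    rw [this]
    exact hmr
  set eB := LinearMap.quotKerEquivOfSurjective τ hτsurj with heBdef
  set ψ : (↥Y) →ₗ[Aᵐᵒᵖ] (A ⧸ m) :=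
    ((LinearMap.ker τ).liftQ ω hker) ∘ₗ eB.symm.toLinearMap ∘ₗ N.mkQ with hψdef
  obtain ⟨c', hc'⟩ := exists_left_mul_of_map Y (ε ∘ₗ ψ)
  have hc'I : ∀ w ∈ I, c' * w = 0 := by
    intro w hw
    have hwY : w ∈ Y := Submodule.mem_sup_left (show w ∈ I'' from hw)
    have h0 : ψ ⟨w, hwY⟩ = 0 := by
      have hq : N.mkQ ⟨w, hwY⟩ = 0 :=
        (Submodule.Quotient.mk_eq_zero N).mpr (show ((⟨w, hwY⟩ : ↥Y)) ∈ N from hw)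
      rw [hψdef, LinearMap.comp_apply, LinearMap.comp_apply, hq, map_zero, map_zero]
    have hcw := hc' ⟨w, hwY⟩
    rw [LinearMap.comp_apply, h0, map_zero] at hcw
    exact hcw.symm
  obtain ⟨x₀, hx₀, hc'e⟩ := lem2 c' hc'I
  have hzval : (ε ∘ₗ ψ) ⟨z, hzY⟩ = ε (Submodule.Quotient.mk (1 : A)) := by
    rw [LinearMap.comp_apply]
    congr 1
    rw [hψdef]
    simp only [LinearMap.comp_apply, Submodule.mkQ_apply]
    have h1 : (Submodule.Quotient.mk (⟨z, hzY⟩ : ↥Y) : ↥Y ⧸ N) = τ 1 := by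
      rw [hτdef, LinearMap.toSpanSingleton_apply, one_smul, hzbar]
    rw [h1]
    have h2 : eB.symm (τ 1) = Submodule.Quotient.mk (1 : Aᵐᵒᵖ) := by
      rw [LinearEquiv.symm_apply_eq]
      rfl
    show ((LinearMap.ker τ).liftQ ω hker) (eB.symm (τ 1)) = Submodule.Quotient.mk (1 : A)
    rw [h2, Submodule.liftQ_apply, hωdef, LinearMap.toSpanSingleton_apply, one_smul]
  have hzc : c' * z = ε (Submodule.Quotient.mk (1 : A)) := by
    rw [← hzval]
    exact (hc' ⟨z, hzY⟩).symm
  have hz0 : c' * z = 0 := by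
    rw [hc'e, mul_assoc, hz2 x₀ hx₀, mul_zero]
  rw [hz0] at hzc
  have hmk0 : (Submodule.Quotient.mk (1 : A) : A ⧸ m) = 0 := by
    apply hε
    rw [← hzc, map_zero]
  rw [Submodule.Quotient.mk_eq_zero] at hmk0
  exact absurd hmk0 h1m

end Crux


/-- Let `A` be a finite-dimensional selfinjective algebra over a field `K`,
`I` a two-sided ideal of `A`, and `e` an idempotent with `l_A(I) = eI`.  Then, inside the
corner algebra `eAe = {x | e * x * e = x}`, the left annihilator of `I` and the right
annihilator of `I` both coincide with `eIe`. -/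
theorem corner_annihilators_eq_eIe
    {K A : Type*} [Field K] [Ring A] [Algebra K A] [FiniteDimensional K A]
    [Module.Injective Aᵐᵒᵖ A]
    (I : Ideal A) (hI : ∀ x ∈ I, ∀ a : A, x * a ∈ I)  -- `I` is a two-sided ideal
    (e : A) (he : IsIdempotentElem e)
    (hann : lAnn (I : Set A) = (fun x => e * x) '' (I : Set A)) :
    {z : A | e * z * e = z ∧ ∀ y ∈ I, z * y = 0} = (fun x => e * x * e) '' (I : Set A) ∧
    {z : A | e * z * e = z ∧ ∀ y ∈ I, y * z = 0} = (fun x => e * x * e) '' (I : Set A) := by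
  classical
  haveI : IsArtinian Aᵐᵒᵖ A := isArtinian_of_tower K inferInstance
  haveI : IsNoetherian Aᵐᵒᵖ A := isNoetherian_of_tower K inferInstance
  have hee : e * e = e := he
  -- forward direction of the annihilator hypothesis
  have lem1 : ∀ x ∈ I, ∀ y ∈ I, (e * x) * y = 0 := by
    intro x hx y hy
    have hmem : e * x ∈ lAnn (I : Set A) := by
      rw [hann]
      exact ⟨x, hx, rfl⟩
    exact hmem y hy
  -- backward direction
  have lem2 : ∀ w : A, (∀ y ∈ I, w * y = 0) → ∃ x ∈ I, w = e * x := by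
    intro w hw
    have hmem : w ∈ lAnn (I : Set A) := fun y hy => hw y hy
    rw [hann] at hmem
    obtain ⟨x, hx, hxe⟩ := hmem
    exact ⟨x, hx, hxe.symm⟩
  -- `x * (e * y) = 0` for all `x, y ∈ I`
  have keyA : ∀ x ∈ I, ∀ y ∈ I, x * (e * y) = 0 := by
    intro x hx y hy
    have hey : e * y ∈ I := I.mul_mem_left e hy
    have hw : ∀ y' ∈ I, (x * (e * y) - e * (x * (e * y))) * y' = 0 := by
      intro y' hy'
      have h1 : (e * y) * y' = 0 := lem1 y hy y' hy'
      have h2 : x * (e * y) * y' = 0 := by rw [mul_assoc, h1, mul_zero]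
      rw [sub_mul, h2, mul_assoc, h2, mul_zero, sub_zero]
    obtain ⟨x₁, hx₁, hweq⟩ := lem2 _ hw
    have hew : e * (x * (e * y) - e * (x * (e * y))) = 0 := by
      have h4 : e * (e * (x * (e * y))) = e * (x * (e * y)) := by rw [← mul_assoc, hee]
      rw [mul_sub, h4, sub_self]
    rw [hweq, ← mul_assoc, hee] at hew
    have hzero : x * (e * y) - e * (x * (e * y)) = 0 := by rw [hweq, hew]
    have h3 : x * (e * y) = e * (x * (e * y)) := sub_eq_zero.mp hzero
    rw [h3, ← mul_assoc]
    exact lem1 x hx (e * y) hey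
  -- `x * e = e * (x * e)` for all `x ∈ I`
  have keyB : ∀ x ∈ I, x * e = e * (x * e) := by
    intro x hx
    have hw : ∀ y ∈ I, (x * e - e * (x * e)) * y = 0 := by
      intro y hy
      have h1 : x * (e * y) = 0 := keyA x hx y hy
      have h2 : (x * e) * y = 0 := by rw [mul_assoc]; exact h1
      rw [sub_mul, h2, mul_assoc, h2, mul_zero, sub_zero]
    obtain ⟨x₁, hx₁, hweq⟩ := lem2 _ hw
    have hew : e * (x * e - e * (x * e)) = 0 := by
      have h4 : e * (e * (x * e)) = e * (x * e) := by rw [← mul_assoc, hee]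
      rw [mul_sub, h4, sub_self]
    rw [hweq, ← mul_assoc, hee] at hew
    have hzero : x * e - e * (x * e) = 0 := by rw [hweq, hew]
    exact sub_eq_zero.mp hzero
  -- idempotent conjugation identity
  have hid : ∀ x : A, e * (e * x * e) * e = e * x * e := by
    intro x
    have h1 : e * (e * x * e) = e * x * e := by rw [← mul_assoc, ← mul_assoc, hee]
    rw [h1, mul_assoc, hee]
  constructor
  · -- left annihilator in the corner
    ext z
    simp only [Set.mem_setOf_eq, Set.mem_image, SetLike.mem_coe]
    constructor
    · rintro ⟨hz1, hz2⟩
      obtain ⟨x, hx, hzx⟩ := lem2 z hz2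
      have hzI : z ∈ I := by rw [hzx]; exact I.mul_mem_left e hx
      exact ⟨z, hzI, hz1⟩
    · rintro ⟨x, hx, rfl⟩
      refine ⟨hid x, ?_⟩
      intro y hy
      have h1 : (x * e) * y = 0 := by
        rw [mul_assoc]
        exact keyA x hx y hy
      calc (e * x * e) * y = e * ((x * e) * y) := by simp only [mul_assoc]
        _ = 0 := by rw [h1, mul_zero]
  · -- right annihilator in the corner
    ext z
    simp only [Set.mem_setOf_eq, Set.mem_image, SetLike.mem_coe]
    constructor
    · rintro ⟨hz1, hz2⟩
      have hzI : z ∈ I := mem_of_right_ann I hI e lem2 z hz2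
      exact ⟨z, hzI, hz1⟩
    · rintro ⟨x, hx, rfl⟩
      refine ⟨hid x, ?_⟩
      intro y hy
      have hye : y * e ∈ I := hI y hy e
      have hxe : x * e ∈ I := hI x hx e
      have h1 : y * e = e * (y * e) := keyB y hy
      have h2 : (e * (y * e)) * (x * e) = 0 := lem1 (y * e) hye (x * e) hxe
      calc y * (e * x * e) = (y * e) * (x * e) := by simp only [mul_assoc]
        _ = (e * (y * e)) * (x * e) := by rw [← h1]
        _ = 0 := h2
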